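/- Let n ≥ 2 and u = (u_1,...,u_n) ∈ ℕ^n. The number of monomials x^a y^b z^c in the polynomial ring K[x_1,y_1,z_1,...,x_n,y_n,z_n] of multidegree u (i.e., a_i+b_i+c_i = u_i for each i) that are NOT divisible by any of the monomials x_i x_j, x_i y_j y_k, or y_i y_j y_k y_l (for distinct indices i,j,k,l in [n]) equals C(u_1+...+u_n+3, 3) - Σ_{i=1}^n C(u_i+2, 3). -/

import Mathlib

namespace HF

variable {n : ℕ}

/-- support of `b` has at most 1 element -/
def S1 (b : Fin n → ℕ) : Prop := ∀ i j, 1 ≤ b i → 1 ≤ b j → i = j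
/-- support of `b` has at most 2 elements -/
def S2 (b : Fin n → ℕ) : Prop := ∀ i j k, 1 ≤ b i → 1 ≤ b j → 1 ≤ b k → i = j ∨ i = k ∨ j = k
/-- support of `b` has at most 3 elements -/
def S3 (b : Fin n → ℕ) : Prop := ∀ i j k l, 1 ≤ b i → 1 ≤ b j → 1 ≤ b k → 1 ≤ b l →
  i = j ∨ i = k ∨ i = l ∨ j = k ∨ j = l ∨ k = l
def Cross (a b : Fin n → ℕ) : Prop := ∀ i j k, 1 ≤ a i → 1 ≤ b j → 1 ≤ b k → j = k ∨ i = j ∨ i = k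

def Adm (u : Fin n → ℕ) (p : (Fin n → ℕ) × (Fin n → ℕ)) : Prop :=
  (∀ i, p.1 i + p.2 i ≤ u i) ∧ S1 p.1 ∧ Cross p.1 p.2 ∧ S3 p.2

def Yp (u : Fin n → ℕ) (p : (Fin n → ℕ) × (Fin n → ℕ)) : Prop :=
  (∀ i, p.1 i + p.2 i ≤ u i) ∧ ∃ i, 1 ≤ p.1 i ∧ ∀ j, j ≠ i → p.1 j = 0 ∧ p.2 j = 0

def Zp (u : Fin n → ℕ) (p : (Fin n → ℕ) × (Fin n → ℕ)) : Prop :=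
  (∀ i, p.1 i + p.2 i ≤ u i) ∧ S1 p.1 ∧ (∀ i k, 1 ≤ p.1 i → 1 ≤ p.2 k → i = k) ∧ S2 p.2

noncomputable def Ncard (u : Fin n → ℕ) : ℕ := Nat.card {p // Adm u p}
noncomputable def X1 (u : Fin n → ℕ) : ℕ := Nat.card {b : Fin n → ℕ // (∀ i, b i ≤ u i) ∧ S1 b}
noncomputable def X2 (u : Fin n → ℕ) : ℕ := Nat.card {b : Fin n → ℕ // (∀ i, b i ≤ u i) ∧ S2 b}
noncomputable def Ycard (u : Fin n → ℕ) : ℕ := Nat.card {p // Yp u p}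
noncomputable def Zcard (u : Fin n → ℕ) : ℕ := Nat.card {p // Zp u p}

/-! ### Finiteness -/

lemma finite_sub (u : Fin n → ℕ) (P : (Fin n → ℕ) → Prop) (h : ∀ b, P b → ∀ i, b i ≤ u i) :
    Finite {b // P b} := by
  apply Finite.of_injective
    (fun x : {b // P b} => (fun i => (⟨x.1 i, Nat.lt_succ_of_le (h x.1 x.2 i)⟩ : Fin (u i + 1))))
  intro x y hxy
  ext i
  exact congrArg Fin.val (congrFun hxy i)

lemma finite_sub2 (u : Fin n → ℕ) (P : (Fin n → ℕ) × (Fin n → ℕ) → Prop)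
    (h : ∀ p, P p → ∀ i, p.1 i ≤ u i ∧ p.2 i ≤ u i) :
    Finite {p // P p} := by
  apply Finite.of_injective
    (fun x : {p // P p} =>
      ((fun i => (⟨x.1.1 i, Nat.lt_succ_of_le (h x.1 x.2 i).1⟩ : Fin (u i + 1))),
       (fun i => (⟨x.1.2 i, Nat.lt_succ_of_le (h x.1 x.2 i).2⟩ : Fin (u i + 1)))))
  intro x y hxy
  obtain ⟨h1, h2⟩ := Prod.mk.injEq .. ▸ hxy
  ext i
  · exact congrArg Fin.val (congrFun h1 i)
  · exact congrArg Fin.val (congrFun h2 i)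

instance finN (u : Fin n → ℕ) : Finite {p // Adm u p} :=
  finite_sub2 u _ (fun p hp i => ⟨le_trans (Nat.le_add_right _ _) (hp.1 i),
    le_trans (Nat.le_add_left _ _) (hp.1 i)⟩)

instance finX1 (u : Fin n → ℕ) : Finite {b : Fin n → ℕ // (∀ i, b i ≤ u i) ∧ S1 b} :=
  finite_sub u _ (fun _ hb => hb.1)

instance finX2 (u : Fin n → ℕ) : Finite {b : Fin n → ℕ // (∀ i, b i ≤ u i) ∧ S2 b} :=
  finite_sub u _ (fun _ hb => hb.1)

instance finY (u : Fin n → ℕ) : Finite {p // Yp u p} :=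
  finite_sub2 u _ (fun p hp i => ⟨le_trans (Nat.le_add_right _ _) (hp.1 i),
    le_trans (Nat.le_add_left _ _) (hp.1 i)⟩)

instance finZ (u : Fin n → ℕ) : Finite {p // Zp u p} :=
  finite_sub2 u _ (fun p hp i => ⟨le_trans (Nat.le_add_right _ _) (hp.1 i),
    le_trans (Nat.le_add_left _ _) (hp.1 i)⟩)

/-! ### splitting -/

lemma card_split {α : Type*} (P Q : α → Prop) [Finite {x // P x}] :
    Nat.card {x // P x} = Nat.card {x // P x ∧ Q x} + Nat.card {x // P x ∧ ¬ Q x} := by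
  classical
  haveI : Finite {x // P x ∧ Q x} :=
    Finite.of_injective (fun x : {x // P x ∧ Q x} => (⟨x.1, x.2.1⟩ : {x // P x}))
      (by intro a b hab; have := congrArg Subtype.val hab; exact Subtype.ext this)
  haveI : Finite {x // P x ∧ ¬ Q x} :=
    Finite.of_injective (fun x : {x // P x ∧ ¬ Q x} => (⟨x.1, x.2.1⟩ : {x // P x}))
      (by intro a b hab; have := congrArg Subtype.val hab; exact Subtype.ext this)
  rw [← Nat.card_sum]
  apply Nat.card_congr
  exact {
    toFun := fun x => if h : Q x.1 then .inl ⟨x.1, x.2, h⟩ else .inr ⟨x.1, x.2, h⟩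
    invFun := fun y => y.elim (fun a => ⟨a.1, a.2.1⟩) (fun a => ⟨a.1, a.2.1⟩)
    left_inv := fun x => by by_cases h : Q x.1 <;> simp [h]
    right_inv := fun y => by
      rcases y with a | a
      · simp [a.2.2]
      · simp [a.2.2] }

/-! ### small cardinalities -/

lemma card_Iv (v : ℕ) : Nat.card {β : ℕ // 1 ≤ β ∧ β ≤ v} = v := by
  have e : {β : ℕ // 1 ≤ β ∧ β ≤ v} ≃ Fin v :=
    { toFun := fun x => ⟨x.1 - 1, by omega⟩
      invFun := fun k => ⟨k.1 + 1, by omega⟩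
      left_inv := fun x => by apply Subtype.ext; have := x.2.1; simp; omega
      right_inv := fun k => by apply Fin.ext; simp }
  rw [Nat.card_congr e, Nat.card_eq_fintype_card, Fintype.card_fin]

lemma finite_tri (v : ℕ) : Finite {p : ℕ × ℕ // 1 ≤ p.1 ∧ p.1 + p.2 ≤ v} := by
  apply Finite.of_injective
    (fun x : {p : ℕ × ℕ // 1 ≤ p.1 ∧ p.1 + p.2 ≤ v} =>
      ((⟨x.1.1, by omega⟩ : Fin (v+1)), (⟨x.1.2, by omega⟩ : Fin (v+1))))
  intro a b hab
  obtain ⟨h1, h2⟩ := Prod.mk.injEq .. ▸ hab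
  apply Subtype.ext
  apply Prod.ext
  · exact congrArg Fin.val h1
  · exact congrArg Fin.val h2

lemma card_tri (v : ℕ) : Nat.card {p : ℕ × ℕ // 1 ≤ p.1 ∧ p.1 + p.2 ≤ v} = (v+1).choose 2 := by
  induction v with
  | zero =>
    have : IsEmpty {p : ℕ × ℕ // 1 ≤ p.1 ∧ p.1 + p.2 ≤ 0} := by
      constructor; rintro ⟨p, h1, h2⟩; omega
    rw [Nat.card_of_isEmpty]
    simp
  | succ v ih =>
    haveI := finite_tri (v+1)
    rw [card_split (fun p : ℕ × ℕ => 1 ≤ p.1 ∧ p.1 + p.2 ≤ v + 1) (fun p => p.1 + p.2 ≤ v)]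
    have e1 : {p : ℕ × ℕ // (1 ≤ p.1 ∧ p.1 + p.2 ≤ v + 1) ∧ p.1 + p.2 ≤ v} ≃
        {p : ℕ × ℕ // 1 ≤ p.1 ∧ p.1 + p.2 ≤ v} :=
      Equiv.subtypeEquivRight (fun p => by constructor <;> intro h <;> [exact ⟨h.1.1, h.2⟩; exact ⟨⟨h.1, by omega⟩, h.2⟩])
    have e2 : {p : ℕ × ℕ // (1 ≤ p.1 ∧ p.1 + p.2 ≤ v + 1) ∧ ¬ p.1 + p.2 ≤ v} ≃
        {β : ℕ // 1 ≤ β ∧ β ≤ v + 1} :=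
      { toFun := fun x => ⟨x.1.1, by have := x.2; omega⟩
        invFun := fun β => ⟨(β.1, v + 1 - β.1), by have := β.2; omega⟩
        left_inv := fun x => by
          apply Subtype.ext; have := x.2
          apply Prod.ext <;> simp <;> omega
        right_inv := fun β => by apply Subtype.ext; simp }
    rw [Nat.card_congr e1, Nat.card_congr e2, ih, card_Iv]
    rw [show (v+1+1).choose 2 = (v+1).choose 1 + (v+1).choose 2 from Nat.choose_succ_succ _ _,
      Nat.choose_one_right]
    omega

/-! ### arithmetic identities -/

lemma L2 (s v : ℕ) : (s+v+2).choose 2 = (s+2).choose 2 + v*(s+1) + (v+1).choose 2 := by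
  induction v with
  | zero => simp
  | succ v ih =>
    have p1 : (s+(v+1)+2).choose 2 = (s+v+2).choose 1 + (s+v+2).choose 2 := by
      rw [show s+(v+1)+2 = (s+v+2)+1 by ring]
      exact Nat.choose_succ_succ _ _
    have p2 : (v+1+1).choose 2 = (v+1).choose 1 + (v+1).choose 2 := Nat.choose_succ_succ _ _
    have p3 : (v+1)*(s+1) = v*(s+1) + (s+1) := by ring
    rw [Nat.choose_one_right] at p1 p2
    linarith
lemma L3 (s v : ℕ) : (s+v+3).choose 3 =
    (s+3).choose 3 + v*(s+2).choose 2 + (v+1).choose 2 * (s+1) + (v+2).choose 3 := by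
  induction v with
  | zero => simp
  | succ v ih =>
    have p1 : (s+(v+1)+3).choose 3 = (s+v+3).choose 2 + (s+v+3).choose 3 := by
      rw [show s+(v+1)+3 = (s+v+3)+1 by ring]
      exact Nat.choose_succ_succ _ _
    have p2 : (s+v+3).choose 2 = (s+2).choose 2 + (v+1)*(s+1) + (v+2).choose 2 := by
      have := L2 s (v+1); rw [show s+(v+1)+2 = s+v+3 by ring] at this; exact this
    have p3 : (v+3).choose 3 = (v+2).choose 2 + (v+2).choose 3 := Nat.choose_succ_succ _ _
    have p4 : (v+2).choose 2 = (v+1) + (v+1).choose 2 := by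
      have := Nat.choose_succ_succ (v+1) 1; rw [Nat.choose_one_right] at this; exact this
    have p5 : (v+1)*(s+2).choose 2 = v*(s+2).choose 2 + (s+2).choose 2 := by ring
    have p6 : (v+2).choose 2 * (s+1) = (v+1).choose 2 * (s+1) + (v+1)*(s+1) := by
      rw [p4]; ring
    have p7 : (s+2).choose 2 = (s+1) + (s+1).choose 2 := by
      have := Nat.choose_succ_succ (s+1) 1; rw [Nat.choose_one_right] at this; exact this
    linarith


/-! ### transfer helpers along `Fin.cons` / `Fin.tail` -/

section Helpers
variable {v β : ℕ} {w b b' a' : Fin n → ℕ}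

lemma S1_tail {b : Fin (n+1) → ℕ} (h : S1 b) : S1 (Fin.tail b) :=
  fun i j h1 h2 => Fin.succ_injective _ (h i.succ j.succ h1 h2)

lemma S2_tail {b : Fin (n+1) → ℕ} (h : S2 b) : S2 (Fin.tail b) := by
  intro i j k h1 h2 h3
  rcases h i.succ j.succ k.succ h1 h2 h3 with h' | h' | h'
  · exact Or.inl (Fin.succ_injective _ h')
  · exact Or.inr (Or.inl (Fin.succ_injective _ h'))
  · exact Or.inr (Or.inr (Fin.succ_injective _ h'))

lemma S3_tail {b : Fin (n+1) → ℕ} (h : S3 b) : S3 (Fin.tail b) := by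
  intro i j k l h1 h2 h3 h4
  rcases h i.succ j.succ k.succ l.succ h1 h2 h3 h4 with h'|h'|h'|h'|h'|h' <;>
    [exact Or.inl (Fin.succ_injective _ h');
     exact Or.inr (Or.inl (Fin.succ_injective _ h'));
     exact Or.inr (Or.inr (Or.inl (Fin.succ_injective _ h')));
     exact Or.inr (Or.inr (Or.inr (Or.inl (Fin.succ_injective _ h'))));
     exact Or.inr (Or.inr (Or.inr (Or.inr (Or.inl (Fin.succ_injective _ h')))));
     exact Or.inr (Or.inr (Or.inr (Or.inr (Or.inr (Fin.succ_injective _ h')))))]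

lemma Cross_tail {a b : Fin (n+1) → ℕ} (h : Cross a b) : Cross (Fin.tail a) (Fin.tail b) := by
  intro i j k h1 h2 h3
  rcases h i.succ j.succ k.succ h1 h2 h3 with h' | h' | h'
  · exact Or.inl (Fin.succ_injective _ h')
  · exact Or.inr (Or.inl (Fin.succ_injective _ h'))
  · exact Or.inr (Or.inr (Fin.succ_injective _ h'))

lemma le_cons (hβ : β ≤ v) (hb : ∀ i, b i ≤ w i) :
    ∀ i : Fin (n+1), Fin.cons (α := fun _ => ℕ) β b i ≤ Fin.cons (α := fun _ => ℕ) v w i := by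
  intro i
  induction i using Fin.cases with
  | zero => simpa using hβ
  | succ i => simpa using hb i

lemma S1_cons0 (h : S1 b) : S1 (Fin.cons 0 b) := by
  intro i j h1 h2
  induction i using Fin.cases with
  | zero => simp at h1
  | succ i =>
    induction j using Fin.cases with
    | zero => simp at h2
    | succ j =>
      simp only [Fin.cons_succ] at h1 h2
      exact congrArg Fin.succ (h i j h1 h2)

lemma S1_consZ (β : ℕ) : S1 (Fin.cons β (0 : Fin n → ℕ)) := by
  intro i j h1 h2
  induction i using Fin.cases with
  | zero =>
    induction j using Fin.cases with
    | zero => rfl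
    | succ j => simp at h2
  | succ i => simp at h1

lemma tail_eq_zero {b : Fin (n+1) → ℕ} (h : S1 b) (h0 : 1 ≤ b 0) :
    b = Fin.cons (b 0) (0 : Fin n → ℕ) := by
  funext i
  induction i using Fin.cases with
  | zero => simp
  | succ i =>
    simp only [Fin.cons_succ, Pi.zero_apply]
    by_contra hne
    exact Fin.succ_ne_zero i (h i.succ 0 (by omega) h0)

lemma S2_cons0 (h : S2 b) : S2 (Fin.cons 0 b) := by
  intro i j k h1 h2 h3
  induction i using Fin.cases with
  | zero => simp at h1
  | succ i =>
    induction j using Fin.cases with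
    | zero => simp at h2
    | succ j =>
      induction k using Fin.cases with
      | zero => simp at h3
      | succ k =>
        simp only [Fin.cons_succ] at h1 h2 h3
        rcases h i j k h1 h2 h3 with h'|h'|h'
        · exact Or.inl (congrArg Fin.succ h')
        · exact Or.inr (Or.inl (congrArg Fin.succ h'))
        · exact Or.inr (Or.inr (congrArg Fin.succ h'))

lemma S2_cons_of_S1 (β : ℕ) (h : S1 b) : S2 (Fin.cons β b) := by
  intro i j k h1 h2 h3
  induction i using Fin.cases with
  | zero =>
    induction j using Fin.cases with
    | zero => exact Or.inl rfl
    | succ j =>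
      induction k using Fin.cases with
      | zero => exact Or.inr (Or.inl rfl)
      | succ k =>
        simp only [Fin.cons_succ] at h2 h3
        exact Or.inr (Or.inr (congrArg Fin.succ (h j k h2 h3)))
  | succ i =>
    induction j using Fin.cases with
    | zero =>
      induction k using Fin.cases with
      | zero => exact Or.inr (Or.inr rfl)
      | succ k =>
        simp only [Fin.cons_succ] at h1 h3
        exact Or.inr (Or.inl (congrArg Fin.succ (h i k h1 h3)))
    | succ j =>
      simp only [Fin.cons_succ] at h1 h2
      exact Or.inl (congrArg Fin.succ (h i j h1 h2))

lemma S1_of_S2_head {b : Fin (n+1) → ℕ} (h : S2 b) (h0 : 1 ≤ b 0) : S1 (Fin.tail b) := by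
  intro i j h1 h2
  rcases h 0 i.succ j.succ h0 h1 h2 with h' | h' | h'
  · exact absurd h'.symm (Fin.succ_ne_zero i)
  · exact absurd h'.symm (Fin.succ_ne_zero j)
  · exact Fin.succ_injective _ h'

lemma S2_of_S3_head {b : Fin (n+1) → ℕ} (h : S3 b) (h0 : 1 ≤ b 0) : S2 (Fin.tail b) := by
  intro i j k h1 h2 h3
  rcases h 0 i.succ j.succ k.succ h0 h1 h2 h3 with h'|h'|h'|h'|h'|h'
  · exact absurd h'.symm (Fin.succ_ne_zero i)
  · exact absurd h'.symm (Fin.succ_ne_zero j)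
  · exact absurd h'.symm (Fin.succ_ne_zero k)
  · exact Or.inl (Fin.succ_injective _ h')
  · exact Or.inr (Or.inl (Fin.succ_injective _ h'))
  · exact Or.inr (Or.inr (Fin.succ_injective _ h'))

lemma S1_of_Cross_head {a b : Fin (n+1) → ℕ} (h : Cross a b) (h0 : 1 ≤ a 0) :
    S1 (Fin.tail b) := by
  intro i j h1 h2
  rcases h 0 i.succ j.succ h0 h1 h2 with h' | h' | h'
  · exact Fin.succ_injective _ h'
  · exact absurd h'.symm (Fin.succ_ne_zero i)
  · exact absurd h'.symm (Fin.succ_ne_zero j)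

lemma crossZ_of_Cross {a b : Fin (n+1) → ℕ} (h : Cross a b) (h0 : 1 ≤ b 0) :
    ∀ i k, 1 ≤ Fin.tail a i → 1 ≤ Fin.tail b k → i = k := by
  intro i k h1 h2
  rcases h i.succ 0 k.succ h1 h0 h2 with h' | h' | h'
  · exact absurd h'.symm (Fin.succ_ne_zero k)
  · exact absurd h' (Fin.succ_ne_zero i)
  · exact Fin.succ_injective _ h'

lemma Cross_cons00 {a b : Fin n → ℕ} (h : Cross a b) : Cross (Fin.cons 0 a) (Fin.cons 0 b) := by
  intro i j k h1 h2 h3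
  induction i using Fin.cases with
  | zero => simp at h1
  | succ i =>
    induction j using Fin.cases with
    | zero => simp at h2
    | succ j =>
      induction k using Fin.cases with
      | zero => simp at h3
      | succ k =>
        simp only [Fin.cons_succ] at h1 h2 h3
        rcases h i j k h1 h2 h3 with h'|h'|h'
        · exact Or.inl (congrArg Fin.succ h')
        · exact Or.inr (Or.inl (congrArg Fin.succ h'))
        · exact Or.inr (Or.inr (congrArg Fin.succ h'))

lemma Cross_consA (α β : ℕ) (h : S1 b) : Cross (Fin.cons α (0 : Fin n → ℕ)) (Fin.cons β b) := by
  intro i j k h1 h2 h3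
  induction i using Fin.cases with
  | succ i => simp at h1
  | zero =>
    induction j using Fin.cases with
    | zero => exact Or.inr (Or.inl rfl)
    | succ j =>
      induction k using Fin.cases with
      | zero => exact Or.inr (Or.inr rfl)
      | succ k =>
        simp only [Fin.cons_succ] at h2 h3
        exact Or.inl (congrArg Fin.succ (h j k h2 h3))

lemma Cross_consZ (β : ℕ) (h : ∀ i k, 1 ≤ a' i → 1 ≤ b' k → i = k) :
    Cross (Fin.cons 0 a') (Fin.cons β b') := by
  intro i j k h1 h2 h3
  induction i using Fin.cases with
  | zero => simp at h1
  | succ i =>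
    induction j using Fin.cases with
    | zero =>
      induction k using Fin.cases with
      | zero => exact Or.inl rfl
      | succ k =>
        simp only [Fin.cons_succ] at h1 h3
        exact Or.inr (Or.inr (congrArg Fin.succ (h i k h1 h3)))
    | succ j =>
      induction k using Fin.cases with
      | zero =>
        simp only [Fin.cons_succ] at h1 h2
        exact Or.inr (Or.inl (congrArg Fin.succ (h i j h1 h2)))
      | succ k =>
        simp only [Fin.cons_succ] at h1 h2 h3
        have e1 := h i j h1 h2
        have e2 := h i k h1 h3
        exact Or.inl (congrArg Fin.succ (e1 ▸ e2 ▸ rfl))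

lemma S3_cons_of_S2 (β : ℕ) (h : S2 b) : S3 (Fin.cons β b) := by
  intro i j k l h1 h2 h3 h4
  induction i using Fin.cases with
  | zero =>
    induction j using Fin.cases with
    | zero => exact Or.inl rfl
    | succ j =>
      induction k using Fin.cases with
      | zero => exact Or.inr (Or.inl rfl)
      | succ k =>
        induction l using Fin.cases with
        | zero => exact Or.inr (Or.inr (Or.inl rfl))
        | succ l =>
          simp only [Fin.cons_succ] at h2 h3 h4
          rcases h j k l h2 h3 h4 with h'|h'|h'
          · exact Or.inr (Or.inr (Or.inr (Or.inl (congrArg Fin.succ h'))))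
          · exact Or.inr (Or.inr (Or.inr (Or.inr (Or.inl (congrArg Fin.succ h')))))
          · exact Or.inr (Or.inr (Or.inr (Or.inr (Or.inr (congrArg Fin.succ h')))))
  | succ i =>
    induction j using Fin.cases with
    | zero =>
      induction k using Fin.cases with
      | zero => exact Or.inr (Or.inr (Or.inr (Or.inl rfl)))
      | succ k =>
        induction l using Fin.cases with
        | zero => exact Or.inr (Or.inr (Or.inr (Or.inr (Or.inl rfl))))
        | succ l =>
          simp only [Fin.cons_succ] at h1 h3 h4
          rcases h i k l h1 h3 h4 with h'|h'|h'
          · exact Or.inr (Or.inl (congrArg Fin.succ h'))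
          · exact Or.inr (Or.inr (Or.inl (congrArg Fin.succ h')))
          · exact Or.inr (Or.inr (Or.inr (Or.inr (Or.inr (congrArg Fin.succ h')))))
    | succ j =>
      induction k using Fin.cases with
      | zero =>
        induction l using Fin.cases with
        | zero => exact Or.inr (Or.inr (Or.inr (Or.inr (Or.inr rfl))))
        | succ l =>
          simp only [Fin.cons_succ] at h1 h2 h4
          rcases h i j l h1 h2 h4 with h'|h'|h'
          · exact Or.inl (congrArg Fin.succ h')
          · exact Or.inr (Or.inr (Or.inl (congrArg Fin.succ h')))
          · exact Or.inr (Or.inr (Or.inr (Or.inr (Or.inl (congrArg Fin.succ h')))))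
      | succ k =>
        induction l using Fin.cases with
        | zero =>
          simp only [Fin.cons_succ] at h1 h2 h3
          rcases h i j k h1 h2 h3 with h'|h'|h'
          · exact Or.inl (congrArg Fin.succ h')
          · exact Or.inr (Or.inl (congrArg Fin.succ h'))
          · exact Or.inr (Or.inr (Or.inr (Or.inl (congrArg Fin.succ h'))))
        | succ l =>
          simp only [Fin.cons_succ] at h1 h2 h3
          rcases h i j k h1 h2 h3 with h'|h'|h'
          · exact Or.inl (congrArg Fin.succ h')
          · exact Or.inr (Or.inl (congrArg Fin.succ h'))
          · exact Or.inr (Or.inr (Or.inr (Or.inl (congrArg Fin.succ h'))))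

lemma S3_cons0 (h : S3 b) : S3 (Fin.cons 0 b) := by
  intro i j k l h1 h2 h3 h4
  induction i using Fin.cases with
  | zero => simp at h1
  | succ i =>
    induction j using Fin.cases with
    | zero => simp at h2
    | succ j =>
      induction k using Fin.cases with
      | zero => simp at h3
      | succ k =>
        induction l using Fin.cases with
        | zero => simp at h4
        | succ l =>
          simp only [Fin.cons_succ] at h1 h2 h3 h4
          rcases h i j k l h1 h2 h3 h4 with h'|h'|h'|h'|h'|h'
          · exact Or.inl (congrArg Fin.succ h')
          · exact Or.inr (Or.inl (congrArg Fin.succ h'))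
          · exact Or.inr (Or.inr (Or.inl (congrArg Fin.succ h')))
          · exact Or.inr (Or.inr (Or.inr (Or.inl (congrArg Fin.succ h'))))
          · exact Or.inr (Or.inr (Or.inr (Or.inr (Or.inl (congrArg Fin.succ h')))))
          · exact Or.inr (Or.inr (Or.inr (Or.inr (Or.inr (congrArg Fin.succ h')))))

end Helpers

/-! ### recursion lemmas -/

lemma S2_of_S1 {b : Fin n → ℕ} (h : S1 b) : S2 b :=
  fun i j _ h1 h2 _ => Or.inl (h i j h1 h2)

lemma X1_cons (v : ℕ) (w : Fin n → ℕ) : X1 (Fin.cons v w) = X1 w + v := by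
  classical
  haveI : Finite {b : Fin (n+1) → ℕ // (∀ i, b i ≤ (Fin.cons v w : Fin (n+1) → ℕ) i) ∧ S1 b} := finX1 _
  have e1 : {b : Fin (n+1) → ℕ // ((∀ i, b i ≤ (Fin.cons v w : Fin (n+1) → ℕ) i) ∧ S1 b) ∧ b 0 = 0} ≃
      {b : Fin n → ℕ // (∀ i, b i ≤ w i) ∧ S1 b} :=
    { toFun := fun x => ⟨Fin.tail x.1,
        fun i => by have h := x.2.1.1 i.succ; simpa [Fin.tail] using h, S1_tail x.2.1.2⟩
      invFun := fun y => ⟨Fin.cons 0 y.1,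
        ⟨⟨le_cons (Nat.zero_le v) y.2.1, S1_cons0 y.2.2⟩, by simp⟩⟩
      left_inv := fun x => by
        apply Subtype.ext
        have h0 : x.1 0 = 0 := x.2.2
        conv_rhs => rw [← Fin.cons_self_tail x.1]
        rw [h0]
      right_inv := fun y => by
        apply Subtype.ext
        simp }
  have e2 : {b : Fin (n+1) → ℕ // ((∀ i, b i ≤ (Fin.cons v w : Fin (n+1) → ℕ) i) ∧ S1 b) ∧ ¬ b 0 = 0} ≃
      {β : ℕ // 1 ≤ β ∧ β ≤ v} :=
    { toFun := fun x => ⟨x.1 0,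
        ⟨by have := x.2.2; omega, by have hb := x.2.1.1 0; simpa using hb⟩⟩
      invFun := fun q => ⟨Fin.cons q.1 0,
        ⟨⟨le_cons q.2.2 (fun i => Nat.zero_le _), S1_consZ q.1⟩, by
          have := q.2.1; simp; omega⟩⟩
      left_inv := fun x => by
        apply Subtype.ext
        exact (tail_eq_zero x.2.1.2 (by have := x.2.2; omega)).symm
      right_inv := fun q => by apply Subtype.ext; simp }
  rw [X1, card_split (fun b : Fin (n+1) → ℕ => (∀ i, b i ≤ (Fin.cons v w : Fin (n+1) → ℕ) i) ∧ S1 b)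
    (fun b => b 0 = 0), Nat.card_congr e1, Nat.card_congr e2, card_Iv]
  rfl

lemma X2_cons (v : ℕ) (w : Fin n → ℕ) : X2 (Fin.cons v w) = X2 w + v * X1 w := by
  classical
  haveI : Finite {b : Fin (n+1) → ℕ // (∀ i, b i ≤ (Fin.cons v w : Fin (n+1) → ℕ) i) ∧ S2 b} := finX2 _
  have e1 : {b : Fin (n+1) → ℕ // ((∀ i, b i ≤ (Fin.cons v w : Fin (n+1) → ℕ) i) ∧ S2 b) ∧ b 0 = 0} ≃
      {b : Fin n → ℕ // (∀ i, b i ≤ w i) ∧ S2 b} :=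
    { toFun := fun x => ⟨Fin.tail x.1,
        fun i => by have h := x.2.1.1 i.succ; simpa [Fin.tail] using h, S2_tail x.2.1.2⟩
      invFun := fun y => ⟨Fin.cons 0 y.1,
        ⟨⟨le_cons (Nat.zero_le v) y.2.1, S2_cons0 y.2.2⟩, by simp⟩⟩
      left_inv := fun x => by
        apply Subtype.ext
        have h0 : x.1 0 = 0 := x.2.2
        conv_rhs => rw [← Fin.cons_self_tail x.1]
        rw [h0]
      right_inv := fun y => by
        apply Subtype.ext
        simp }
  have e2 : {b : Fin (n+1) → ℕ // ((∀ i, b i ≤ (Fin.cons v w : Fin (n+1) → ℕ) i) ∧ S2 b) ∧ ¬ b 0 = 0} ≃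
      {β : ℕ // 1 ≤ β ∧ β ≤ v} × {b : Fin n → ℕ // (∀ i, b i ≤ w i) ∧ S1 b} :=
    { toFun := fun x => (⟨x.1 0,
        ⟨by have := x.2.2; omega, by have hb := x.2.1.1 0; simpa using hb⟩⟩,
        ⟨Fin.tail x.1, fun i => by have h := x.2.1.1 i.succ; simpa [Fin.tail] using h,
         S1_of_S2_head x.2.1.2 (by have := x.2.2; omega)⟩)
      invFun := fun qy => ⟨Fin.cons qy.1.1 qy.2.1,
        ⟨⟨le_cons qy.1.2.2 qy.2.2.1, S2_cons_of_S1 qy.1.1 qy.2.2.2⟩, by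
          have := qy.1.2.1; simp; omega⟩⟩
      left_inv := fun x => by
        apply Subtype.ext
        exact Fin.cons_self_tail x.1
      right_inv := fun qy => by
        refine Prod.ext ?_ ?_
        · apply Subtype.ext; simp
        · apply Subtype.ext; simp }
  rw [X2, card_split (fun b : Fin (n+1) → ℕ => (∀ i, b i ≤ (Fin.cons v w : Fin (n+1) → ℕ) i) ∧ S2 b)
    (fun b => b 0 = 0), Nat.card_congr e1, Nat.card_congr e2, Nat.card_prod, card_Iv]
  rfl

lemma Y_cons (v : ℕ) (w : Fin n → ℕ) :
    Ycard (Fin.cons v w) = (v+1).choose 2 + Ycard w := by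
  classical
  haveI : Finite {p // Yp (Fin.cons v w) p} := finY _
  have e1 : {p // Yp (Fin.cons v w) p ∧ 1 ≤ p.1 0} ≃
      {q : ℕ × ℕ // 1 ≤ q.1 ∧ q.1 + q.2 ≤ v} :=
    { toFun := fun x => ⟨(x.1.1 0, x.1.2 0),
        ⟨x.2.2, by have := x.2.1.1 0; simpa using this⟩⟩
      invFun := fun q => ⟨(Fin.cons q.1.1 0, Fin.cons q.1.2 0),
        ⟨⟨fun i => by
            induction i using Fin.cases with
            | zero => simpa using q.2.2
            | succ i => simp,
          ⟨0, by simpa using q.2.1, fun j hj => by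
            induction j using Fin.cases with
            | zero => exact absurd rfl hj
            | succ j => exact ⟨by simp, by simp⟩⟩⟩,
         by simpa using q.2.1⟩⟩
      left_inv := fun x => by
        obtain ⟨⟨hb, i, hi, hall⟩, h0⟩ := x.2
        have hi0 : i = 0 := by
          by_contra hne
          have h' := (hall 0 (fun h => hne h.symm)).1
          omega
        subst hi0
        apply Subtype.ext
        refine Prod.ext ?_ ?_
        · funext j
          induction j using Fin.cases with
          | zero => simp
          | succ j => simpa using ((hall j.succ (Fin.succ_ne_zero j)).1).symm
        · funext j
          induction j using Fin.cases with
          | zero => simp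
          | succ j => simpa using ((hall j.succ (Fin.succ_ne_zero j)).2).symm
      right_inv := fun q => by
        apply Subtype.ext
        refine Prod.ext ?_ ?_ <;> simp }
  have e2 : {p // Yp (Fin.cons v w) p ∧ ¬ 1 ≤ p.1 0} ≃ {p // Yp w p} :=
    { toFun := fun x => ⟨(Fin.tail x.1.1, Fin.tail x.1.2),
        ⟨fun i => by have := x.2.1.1 i.succ; simpa [Fin.tail] using this, by
          obtain ⟨i, hi, hall⟩ := x.2.1.2
          rcases Fin.eq_zero_or_eq_succ i with rfl | ⟨i', rfl⟩
          · exact absurd hi x.2.2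
          · exact ⟨i', hi, fun j hj =>
              hall j.succ (fun h => hj (Fin.succ_injective _ h))⟩⟩⟩
      invFun := fun y => ⟨(Fin.cons 0 y.1.1, Fin.cons 0 y.1.2),
        ⟨⟨fun i => by
            induction i using Fin.cases with
            | zero => simp
            | succ i => simpa using y.2.1 i,
          by
            obtain ⟨i, hi, hall⟩ := y.2.2
            refine ⟨i.succ, by simpa using hi, fun j hj => ?_⟩
            induction j using Fin.cases with
            | zero => exact ⟨by simp, by simp⟩
            | succ j =>
              have hne : j ≠ i := fun h => hj (congrArg Fin.succ h)
              have := hall j hne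
              exact ⟨by simpa using this.1, by simpa using this.2⟩⟩,
         by simp⟩⟩
      left_inv := fun x => by
        obtain ⟨⟨hb, i, hi, hall⟩, hq⟩ := x.2
        have h0a : x.1.1 0 = 0 := by omega
        have hi0 : i ≠ 0 := fun h => hq (h ▸ hi)
        have h0b : x.1.2 0 = 0 := (hall 0 (fun h => hi0 h.symm)).2
        apply Subtype.ext
        refine Prod.ext ?_ ?_
        · conv_rhs => rw [← Fin.cons_self_tail x.1.1]
          rw [h0a]
        · conv_rhs => rw [← Fin.cons_self_tail x.1.2]
          rw [h0b]
      right_inv := fun y => by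
        apply Subtype.ext
        refine Prod.ext ?_ ?_ <;> simp }
  rw [Ycard, card_split (fun p => Yp (Fin.cons v w) p) (fun p => 1 ≤ p.1 0),
    Nat.card_congr e1, Nat.card_congr e2, card_tri]
  rfl

lemma Z_eq (w : Fin n → ℕ) : Zcard w = X2 w + Ycard w := by
  classical
  haveI : Finite {p // Zp w p} := finZ _
  have e1 : {p // Zp w p ∧ p.1 = 0} ≃ {b : Fin n → ℕ // (∀ i, b i ≤ w i) ∧ S2 b} :=
    { toFun := fun x => ⟨x.1.2, fun i => by have := x.2.1.1 i; omega, x.2.1.2.2.2⟩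
      invFun := fun y => ⟨(0, y.1),
        ⟨⟨fun i => by simpa using y.2.1 i,
          fun i j h1 _ => absurd h1 (by simp),
          fun i k h1 _ => absurd h1 (by simp),
          y.2.2⟩, rfl⟩⟩
      left_inv := fun x => by
        apply Subtype.ext
        refine Prod.ext ?_ ?_
        · exact x.2.2.symm
        · rfl
      right_inv := fun y => by apply Subtype.ext; rfl }
  have e2 : ∀ p : (Fin n → ℕ) × (Fin n → ℕ), (Zp w p ∧ ¬ p.1 = 0) ↔ Yp w p := by
    intro p
    constructor
    · rintro ⟨⟨hb, hS1, hcz, hS2⟩, hne⟩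
      refine ⟨hb, ?_⟩
      obtain ⟨i, hi⟩ := Function.ne_iff.mp hne
      simp only [Pi.zero_apply] at hi
      refine ⟨i, by omega, fun j hj => ⟨?_, ?_⟩⟩
      · by_contra h'
        exact hj (hS1 j i (by omega) (by omega))
      · by_contra h'
        exact hj ((hcz i j (by omega) (by omega)).symm)
    · rintro ⟨hb, i, hi, hall⟩
      refine ⟨⟨hb, ?_, ?_, ?_⟩, ?_⟩
      · intro j k h1 h2
        have hji : j = i := by by_contra h'; have := (hall j h').1; omega
        have hki : k = i := by by_contra h'; have := (hall k h').1; omega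
        rw [hji, hki]
      · intro j k h1 h2
        have hji : j = i := by by_contra h'; have := (hall j h').1; omega
        have hki : k = i := by by_contra h'; have := (hall k h').2; omega
        rw [hji, hki]
      · intro j k l h1 h2 _
        have hji : j = i := by by_contra h'; have := (hall j h').2; omega
        have hki : k = i := by by_contra h'; have := (hall k h').2; omega
        exact Or.inl (hji.trans hki.symm)
      · intro h0
        have := congrFun h0 i
        simp only [Pi.zero_apply] at this
        omega
  rw [Zcard, card_split (fun p => Zp w p) (fun p => p.1 = 0),
    Nat.card_congr e1, Nat.card_congr (Equiv.subtypeEquivRight e2)]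
  rfl

lemma N_cons (v : ℕ) (w : Fin n → ℕ) :
    Ncard (Fin.cons v w) = (v+1).choose 2 * X1 w + (v * Zcard w + Ncard w) := by
  classical
  haveI : Finite {p // Adm (Fin.cons v w) p} := finN _
  haveI : Finite {p // Adm (Fin.cons v w) p ∧ ¬ 1 ≤ p.1 0} :=
    finite_sub2 (Fin.cons v w) _
      (fun p hp i => ⟨by have := hp.1.1 i; omega, by have := hp.1.1 i; omega⟩)
  have eA : {p // Adm (Fin.cons v w) p ∧ 1 ≤ p.1 0} ≃
      {q : ℕ × ℕ // 1 ≤ q.1 ∧ q.1 + q.2 ≤ v} ×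
        {b : Fin n → ℕ // (∀ i, b i ≤ w i) ∧ S1 b} :=
    { toFun := fun x => (⟨(x.1.1 0, x.1.2 0),
        ⟨x.2.2, by have := x.2.1.1 0; simpa using this⟩⟩,
        ⟨Fin.tail x.1.2, fun i => by
          have h := x.2.1.1 i.succ
          simp only [Fin.cons_succ] at h
          exact le_trans (Nat.le_add_left _ _) h,
         S1_of_Cross_head x.2.1.2.2.1 x.2.2⟩)
      invFun := fun qy => ⟨(Fin.cons qy.1.1.1 0, Fin.cons qy.1.1.2 qy.2.1),
        ⟨⟨fun i => by
            induction i using Fin.cases with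
            | zero => simpa using qy.1.2.2
            | succ i => simpa using qy.2.2.1 i,
          S1_consZ qy.1.1.1,
          Cross_consA qy.1.1.1 qy.1.1.2 qy.2.2.2,
          S3_cons_of_S2 qy.1.1.2 (S2_of_S1 qy.2.2.2)⟩,
         by simpa using qy.1.2.1⟩⟩
      left_inv := fun x => by
        obtain ⟨⟨hb, hS1, hCr, hS3⟩, h0⟩ := x.2
        apply Subtype.ext
        refine Prod.ext ?_ ?_
        · exact (tail_eq_zero hS1 h0).symm
        · exact Fin.cons_self_tail x.1.2
      right_inv := fun qy => by
        refine Prod.ext ?_ ?_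
        · apply Subtype.ext; refine Prod.ext ?_ ?_ <;> simp
        · apply Subtype.ext; simp }
  have eB : {p // (Adm (Fin.cons v w) p ∧ ¬ 1 ≤ p.1 0) ∧ 1 ≤ p.2 0} ≃
      {β : ℕ // 1 ≤ β ∧ β ≤ v} × {p // Zp w p} :=
    { toFun := fun x => (⟨x.1.2 0,
        ⟨x.2.2, by have := x.2.1.1.1 0; simp at this; omega⟩⟩,
        ⟨(Fin.tail x.1.1, Fin.tail x.1.2),
         ⟨fun i => by have := x.2.1.1.1 i.succ; simpa [Fin.tail] using this,
          S1_tail x.2.1.1.2.1,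
          crossZ_of_Cross x.2.1.1.2.2.1 x.2.2,
          S2_of_S3_head x.2.1.1.2.2.2 x.2.2⟩⟩)
      invFun := fun qz => ⟨(Fin.cons 0 qz.2.1.1, Fin.cons qz.1.1 qz.2.1.2),
        ⟨⟨⟨fun i => by
            induction i using Fin.cases with
            | zero => simp; have := qz.1.2.2; omega
            | succ i => simpa using qz.2.2.1 i,
           S1_cons0 qz.2.2.2.1,
           Cross_consZ qz.1.1 qz.2.2.2.2.1,
           S3_cons_of_S2 qz.1.1 qz.2.2.2.2.2⟩,
          by simp⟩,
         by simpa using qz.1.2.1⟩⟩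
      left_inv := fun x => by
        have h0a : x.1.1 0 = 0 := by have := x.2.1.2; omega
        apply Subtype.ext
        refine Prod.ext ?_ ?_
        · conv_rhs => rw [← Fin.cons_self_tail x.1.1]
          rw [h0a]
        · exact Fin.cons_self_tail x.1.2
      right_inv := fun qz => by
        refine Prod.ext ?_ ?_
        · apply Subtype.ext; simp
        · apply Subtype.ext; refine Prod.ext ?_ ?_ <;> simp }
  have eC : {p // (Adm (Fin.cons v w) p ∧ ¬ 1 ≤ p.1 0) ∧ ¬ 1 ≤ p.2 0} ≃
      {p // Adm w p} :=
    { toFun := fun x => ⟨(Fin.tail x.1.1, Fin.tail x.1.2),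
        ⟨fun i => by have := x.2.1.1.1 i.succ; simpa [Fin.tail] using this,
         S1_tail x.2.1.1.2.1,
         Cross_tail x.2.1.1.2.2.1,
         S3_tail x.2.1.1.2.2.2⟩⟩
      invFun := fun y => ⟨(Fin.cons 0 y.1.1, Fin.cons 0 y.1.2),
        ⟨⟨⟨fun i => by
            induction i using Fin.cases with
            | zero => simp
            | succ i => simpa using y.2.1 i,
           S1_cons0 y.2.2.1,
           Cross_cons00 y.2.2.2.1,
           S3_cons0 y.2.2.2.2⟩,
          by simp⟩,
         by simp⟩⟩
      left_inv := fun x => by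
        have h0a : x.1.1 0 = 0 := by have := x.2.1.2; omega
        have h0b : x.1.2 0 = 0 := by have := x.2.2; omega
        apply Subtype.ext
        refine Prod.ext ?_ ?_
        · conv_rhs => rw [← Fin.cons_self_tail x.1.1]
          rw [h0a]
        · conv_rhs => rw [← Fin.cons_self_tail x.1.2]
          rw [h0b]
      right_inv := fun y => by
        apply Subtype.ext
        refine Prod.ext ?_ ?_ <;> simp }
  rw [Ncard, card_split (fun p => Adm (Fin.cons v w) p) (fun p => 1 ≤ p.1 0),
    card_split (fun p => Adm (Fin.cons v w) p ∧ ¬ 1 ≤ p.1 0) (fun p => 1 ≤ p.2 0),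
    Nat.card_congr eA, Nat.card_congr eB, Nat.card_congr eC,
    Nat.card_prod, Nat.card_prod, card_tri, card_Iv]
  rfl

/-! ### base cases -/

lemma Ncard_zero (u : Fin 0 → ℕ) : Ncard u = 1 := by
  haveI : Unique {p // Adm u p} :=
    { default := ⟨(0, 0), fun i => i.elim0, fun i => i.elim0, fun i => i.elim0,
        fun i => i.elim0⟩
      uniq := fun x => by
        apply Subtype.ext
        refine Prod.ext ?_ ?_ <;> funext i <;> exact i.elim0 }
  exact Nat.card_unique

lemma X1_zero (u : Fin 0 → ℕ) : X1 u = 1 := by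
  haveI : Unique {b : Fin 0 → ℕ // (∀ i, b i ≤ u i) ∧ S1 b} :=
    { default := ⟨0, fun i => i.elim0, fun i => i.elim0⟩
      uniq := fun x => by
        apply Subtype.ext
        funext i
        exact i.elim0 }
  exact Nat.card_unique

lemma X2_zero (u : Fin 0 → ℕ) : X2 u = 1 := by
  haveI : Unique {b : Fin 0 → ℕ // (∀ i, b i ≤ u i) ∧ S2 b} :=
    { default := ⟨0, fun i => i.elim0, fun i => i.elim0⟩
      uniq := fun x => by
        apply Subtype.ext
        funext i
        exact i.elim0 }
  exact Nat.card_unique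

lemma Ycard_zero (u : Fin 0 → ℕ) : Ycard u = 0 := by
  haveI : IsEmpty {p // Yp u p} := by
    constructor
    rintro ⟨p, _, i, _⟩
    exact i.elim0
  exact Nat.card_of_isEmpty

/-! ### the master induction -/

lemma master : ∀ (n : ℕ) (u : Fin n → ℕ),
    X1 u = (∑ i, u i) + 1 ∧
    X2 u + ∑ i, (u i + 1).choose 2 = ((∑ i, u i) + 2).choose 2 ∧
    Ycard u = ∑ i, (u i + 1).choose 2 ∧
    Ncard u + ∑ i, (u i + 2).choose 3 = ((∑ i, u i) + 3).choose 3 := by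
  intro n
  induction n with
  | zero =>
    intro u
    simp [X1_zero, X2_zero, Ycard_zero, Ncard_zero]
  | succ n ih =>
    intro u
    obtain ⟨h1, h2, h3, h4⟩ := ih (Fin.tail u)
    have hu : u = Fin.cons (u 0) (Fin.tail u) := (Fin.cons_self_tail u).symm
    set v := u 0 with hv
    set w := Fin.tail u with hw
    rw [hu]
    rw [X1_cons, X2_cons, Y_cons, N_cons, Z_eq]
    simp only [Fin.sum_univ_succ, Fin.cons_zero, Fin.cons_succ]
    have hzy : X2 w + Ycard w = ((∑ i, w i) + 2).choose 2 := by omega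
    refine ⟨by omega, ?_, by omega, ?_⟩
    · have l2 := L2 (∑ i, w i) v
      rw [h1]
      rw [show v + ∑ i, w i + 2 = (∑ i, w i) + v + 2 by ring]
      have hm : v * ((∑ i, w i) + 1) = v * (∑ i, w i) + v := by ring
      linarith
    · have l3 := L3 (∑ i, w i) v
      rw [h1, hzy]
      rw [show v + ∑ i, w i + 3 = (∑ i, w i) + v + 3 by ring]
      linarith

/-! ### relating the statement to `Ncard` -/

noncomputable def stmt_equiv (u : Fin n → ℕ) :
    {t : (Fin n → ℕ) × (Fin n → ℕ) × (Fin n → ℕ) //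
      (∀ i, t.1 i + t.2.1 i + t.2.2 i = u i) ∧
      ¬ (∃ i j, i ≠ j ∧ 1 ≤ t.1 i ∧ 1 ≤ t.1 j) ∧
      ¬ (∃ i j k, i ≠ j ∧ i ≠ k ∧ j ≠ k ∧ 1 ≤ t.1 i ∧ 1 ≤ t.2.1 j ∧ 1 ≤ t.2.1 k) ∧
      ¬ (∃ i j k l, i ≠ j ∧ i ≠ k ∧ i ≠ l ∧ j ≠ k ∧ j ≠ l ∧ k ≠ l ∧
          1 ≤ t.2.1 i ∧ 1 ≤ t.2.1 j ∧ 1 ≤ t.2.1 k ∧ 1 ≤ t.2.1 l)} ≃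
    {p // Adm u p} := by
  classical
  refine
    { toFun := fun t => ⟨(t.1.1, t.1.2.1), ?_, ?_, ?_, ?_⟩
      invFun := fun p => ⟨(p.1.1, p.1.2, fun i => u i - p.1.1 i - p.1.2 i), ?_, ?_, ?_, ?_⟩
      left_inv := ?_
      right_inv := ?_ }
  · intro i
    show t.1.1 i + t.1.2.1 i ≤ u i
    have := t.2.1 i
    omega
  · intro i j h1 h2
    by_contra hne
    exact t.2.2.1 ⟨i, j, hne, h1, h2⟩
  · intro i j k h1 h2 h3
    by_contra hne
    push_neg at hne
    exact t.2.2.2.1 ⟨i, j, k, hne.2.1, hne.2.2, hne.1, h1, h2, h3⟩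
  · intro i j k l h1 h2 h3 h4
    by_contra hne
    push_neg at hne
    exact t.2.2.2.2 ⟨i, j, k, l, hne.1, hne.2.1, hne.2.2.1, hne.2.2.2.1, hne.2.2.2.2.1,
      hne.2.2.2.2.2, h1, h2, h3, h4⟩
  · intro i
    show p.1.1 i + p.1.2 i + (u i - p.1.1 i - p.1.2 i) = u i
    have := p.2.1 i
    omega
  · rintro ⟨i, j, hne, h1, h2⟩
    exact hne (p.2.2.1 i j h1 h2)
  · rintro ⟨i, j, k, hij, hik, hjk, h1, h2, h3⟩
    rcases p.2.2.2.1 i j k h1 h2 h3 with h | h | h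
    · exact hjk h
    · exact hij h
    · exact hik h
  · rintro ⟨i, j, k, l, hij, hik, hil, hjk, hjl, hkl, h1, h2, h3, h4⟩
    rcases p.2.2.2.2 i j k l h1 h2 h3 h4 with h | h | h | h | h | h
    · exact hij h
    · exact hik h
    · exact hil h
    · exact hjk h
    · exact hjl h
    · exact hkl h
  · intro t
    apply Subtype.ext
    refine Prod.ext rfl ?_
    refine Prod.ext rfl ?_
    funext i
    have := t.2.1 i
    simp only
    omega
  · intro p
    apply Subtype.ext
    rfl

theorem stmt_main (n : ℕ) (u : Fin n → ℕ) :
    Nat.card {t : (Fin n → ℕ) × (Fin n → ℕ) × (Fin n → ℕ) //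
      (∀ i, t.1 i + t.2.1 i + t.2.2 i = u i) ∧
      ¬ (∃ i j, i ≠ j ∧ 1 ≤ t.1 i ∧ 1 ≤ t.1 j) ∧
      ¬ (∃ i j k, i ≠ j ∧ i ≠ k ∧ j ≠ k ∧ 1 ≤ t.1 i ∧ 1 ≤ t.2.1 j ∧ 1 ≤ t.2.1 k) ∧
      ¬ (∃ i j k l, i ≠ j ∧ i ≠ k ∧ i ≠ l ∧ j ≠ k ∧ j ≠ l ∧ k ≠ l ∧
          1 ≤ t.2.1 i ∧ 1 ≤ t.2.1 j ∧ 1 ≤ t.2.1 k ∧ 1 ≤ t.2.1 l)} =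
    Nat.choose (∑ i, u i + 3) 3 - ∑ i, Nat.choose (u i + 2) 3 := by
  rw [Nat.card_congr (stmt_equiv u)]
  have h4 := (master n u).2.2.2
  have : Nat.card {p // Adm u p} = Ncard u := rfl
  omega

end HF

/-- The multigraded Hilbert function of `K[x,y,z]/M_n`: the number of monomials
`x^a y^b z^c` of multidegree `u` (i.e. `a i + b i + c i = u i` for each `i`) that are not
divisible by any of the generators `x_i x_j`, `x_i y_j y_k`, `y_i y_j y_k y_l` of `M_n`
(with distinct indices) equals `C(u_1+⋯+u_n+3,3) - Σ_i C(u_i+2,3)`. -/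
theorem stmt0 (n : ℕ) (hn : 2 ≤ n) (u : Fin n → ℕ) :
    Nat.card {t : (Fin n → ℕ) × (Fin n → ℕ) × (Fin n → ℕ) //
      (∀ i, t.1 i + t.2.1 i + t.2.2 i = u i) ∧
      ¬ (∃ i j, i ≠ j ∧ 1 ≤ t.1 i ∧ 1 ≤ t.1 j) ∧
      ¬ (∃ i j k, i ≠ j ∧ i ≠ k ∧ j ≠ k ∧ 1 ≤ t.1 i ∧ 1 ≤ t.2.1 j ∧ 1 ≤ t.2.1 k) ∧
      ¬ (∃ i j k l, i ≠ j ∧ i ≠ k ∧ i ≠ l ∧ j ≠ k ∧ j ≠ l ∧ k ≠ l ∧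
          1 ≤ t.2.1 i ∧ 1 ≤ t.2.1 j ∧ 1 ≤ t.2.1 k ∧ 1 ≤ t.2.1 l)} =
    Nat.choose (∑ i, u i + 3) 3 - ∑ i, Nat.choose (u i + 2) 3 :=
  HF.stmt_main n u
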